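/- For every a > 0, every 1-Lipschitz function f : [0,a] → ℝ and every τ ∈ (0,1), one has T_τ(f) ≤ T(f) + 36τa. -/

import Mathlib

open Set

/-- A good partition of `[0,a]`: a strictly decreasing sequence `a = a₀ > a₁ > … > 0`
tending to `0` with `a_{n-1}/a_n ≤ 2`. -/
def IsGoodPartition (a : ℝ) (u : ℕ → ℝ) : Prop :=
  u 0 = a ∧ (∀ n, 0 < u n) ∧ (∀ n, u (n + 1) < u n) ∧
    Filter.Tendsto u Filter.atTop (nhds 0) ∧ ∀ n, u n ≤ 2 * u (n + 1)

/-- A `τ`-good partition: a good partition with `a_{n-1}/a_n ≥ 1 + τ`. -/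
def IsTauGoodPartition (τ a : ℝ) (u : ℕ → ℝ) : Prop :=
  IsGoodPartition a u ∧ ∀ n, (1 + τ) * u (n + 1) ≤ u n

/-- The total drop of `f` according to the partition `(a_n)`:
`T(f,(a_n)) = Σ_{n≥1} (f(a_n) − min_{[a_n, a_{n-1}]} f)`. -/
noncomputable def totalDrop (f : ℝ → ℝ) (u : ℕ → ℝ) : ℝ :=
  ∑' n : ℕ, (f (u (n + 1)) - sInf (f '' Set.Icc (u (n + 1)) (u n)))

/-- `T(f)`: the infimum of the total drop over all good partitions of `[0,a]`. -/
noncomputable def drop (a : ℝ) (f : ℝ → ℝ) : ℝ :=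
  sInf {t | ∃ u, IsGoodPartition a u ∧ t = totalDrop f u}

/-- `T_τ(f)`: the infimum of the total drop over all `τ`-good partitions of `[0,a]`. -/
noncomputable def dropTau (τ a : ℝ) (f : ℝ → ℝ) : ℝ :=
  sInf {t | ∃ u, IsTauGoodPartition τ a u ∧ t = totalDrop f u}

namespace St16


variable {a τ : ℝ} {f : ℝ → ℝ} {u : ℕ → ℝ}

/-! ### Basic facts about good partitions and Lipschitz minima -/

lemma lip_sub (hf : LipschitzOnWith 1 f (Icc 0 a)) {x y : ℝ}
    (hx : x ∈ Icc 0 a) (hy : y ∈ Icc 0 a) : f x - f y ≤ |x - y| := by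
  have h := hf.dist_le_mul x hx y hy
  rw [Real.dist_eq, Real.dist_eq] at h
  calc f x - f y ≤ |f x - f y| := le_abs_self _
    _ ≤ 1 * |x - y| := h
    _ = |x - y| := one_mul _

lemma good_anti (hu : IsGoodPartition a u) : StrictAnti u :=
  strictAnti_nat_of_succ_lt hu.2.2.1

lemma good_le_a (hu : IsGoodPartition a u) (n : ℕ) : u n ≤ a := by
  rw [← hu.1]; exact (good_anti hu).antitone (Nat.zero_le n)

lemma good_mem (hu : IsGoodPartition a u) (n : ℕ) : u n ∈ Icc 0 a :=
  ⟨(hu.2.1 n).le, good_le_a hu n⟩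

lemma mem_of_Icc (hx : x ∈ Icc 0 a) (hy : y ∈ Icc 0 a) {w : ℝ} (hw : w ∈ Icc x y) :
    w ∈ Icc 0 a := ⟨hx.1.trans hw.1, hw.2.trans hy.2⟩

lemma bdd_below_image (hf : LipschitzOnWith 1 f (Icc 0 a)) {x y : ℝ}
    (hx : x ∈ Icc 0 a) (hy : y ∈ Icc 0 a) :
    BddBelow (f '' Icc x y) := by
  refine ⟨f x - |y - x|, ?_⟩
  rintro - ⟨w, hw, rfl⟩
  have h1 : f x - f w ≤ |x - w| := lip_sub hf hx (mem_of_Icc hx hy hw)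
  have h2 : |x - w| ≤ |y - x| := by
    rw [abs_sub_comm, abs_of_nonneg (sub_nonneg.2 hw.1), abs_of_nonneg (sub_nonneg.2 (hw.1.trans hw.2))]
    linarith [hw.2]
  linarith

lemma sInf_le_apply (hf : LipschitzOnWith 1 f (Icc 0 a)) {x y z : ℝ}
    (hx : x ∈ Icc 0 a) (hy : y ∈ Icc 0 a) (hz : z ∈ Icc x y) :
    sInf (f '' Icc x y) ≤ f z :=
  csInf_le (bdd_below_image hf hx hy) ⟨z, hz, rfl⟩

/-- Nonnegativity of a drop term. -/
lemma term_nonneg (hf : LipschitzOnWith 1 f (Icc 0 a)) {x y : ℝ}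
    (hx : x ∈ Icc 0 a) (hy : y ∈ Icc 0 a) (hxy : x ≤ y) :
    0 ≤ f x - sInf (f '' Icc x y) :=
  sub_nonneg.2 (sInf_le_apply hf hx hy ⟨le_refl x, hxy⟩)

/-- Lipschitz bound on a drop term: at most the interval length. -/
lemma term_le_len (hf : LipschitzOnWith 1 f (Icc 0 a)) {x y : ℝ}
    (hx : x ∈ Icc 0 a) (hy : y ∈ Icc 0 a) (hxy : x ≤ y) :
    f x - sInf (f '' Icc x y) ≤ y - x := by
  have h : ∀ t ∈ f '' Icc x y, f x - (y - x) ≤ t := by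
    rintro - ⟨w, hw, rfl⟩
    have h1 : f x - f w ≤ |x - w| := lip_sub hf hx (mem_of_Icc hx hy hw)
    have h2 : |x - w| ≤ y - x := by
      rw [abs_sub_comm, abs_of_nonneg (sub_nonneg.2 hw.1)]; linarith [hw.2]
    linarith
  have := le_csInf (⟨f x, x, ⟨le_refl x, hxy⟩, rfl⟩ : (f '' Icc x y).Nonempty) h
  linarith

/-- The drop terms of a good partition. -/
noncomputable def termU (f : ℝ → ℝ) (u : ℕ → ℝ) (n : ℕ) : ℝ :=
  f (u (n + 1)) - sInf (f '' Icc (u (n + 1)) (u n))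

lemma termU_nonneg (hf : LipschitzOnWith 1 f (Icc 0 a)) (hu : IsGoodPartition a u) (n : ℕ) :
    0 ≤ termU f u n :=
  term_nonneg hf (good_mem hu _) (good_mem hu _) (hu.2.2.1 n).le

lemma termU_summable (hf : LipschitzOnWith 1 f (Icc 0 a)) (hu : IsGoodPartition a u) :
    Summable (termU f u) := by
  refine summable_of_sum_range_le (termU_nonneg hf hu) (fun N => ?_) (c := a)
  calc ∑ n ∈ Finset.range N, termU f u n ≤ ∑ n ∈ Finset.range N, (u n - u (n + 1)) := by
        refine Finset.sum_le_sum fun n _ => ?_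
        exact term_le_len hf (good_mem hu _) (good_mem hu _) (hu.2.2.1 n).le
    _ = u 0 - u N := by
        rw [Finset.sum_range_sub' (fun n => u n)]
    _ ≤ a := by have := hu.2.1 N; have := good_le_a hu 0; linarith

lemma totalDrop_nonneg (hf : LipschitzOnWith 1 f (Icc 0 a)) (hu : IsGoodPartition a u) :
    0 ≤ totalDrop f u :=
  tsum_nonneg (termU_nonneg hf hu)

lemma totalDrop_le_a (hf : LipschitzOnWith 1 f (Icc 0 a)) (hu : IsGoodPartition a u) :
    totalDrop f u ≤ a := by
  refine Summable.tsum_le_of_sum_range_le (termU_summable hf hu) (fun N => ?_)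
  calc ∑ n ∈ Finset.range N, termU f u n ≤ ∑ n ∈ Finset.range N, (u n - u (n + 1)) := by
        refine Finset.sum_le_sum fun n _ => ?_
        exact term_le_len hf (good_mem hu _) (good_mem hu _) (hu.2.2.1 n).le
    _ = u 0 - u N := by rw [Finset.sum_range_sub' (fun n => u n)]
    _ ≤ a := by have := hu.2.1 N; have := good_le_a hu 0; linarith

/-- Chain lemma: a drop over `[u q, u p]` is at most the sum of the step drops. -/
lemma chain (hf : LipschitzOnWith 1 f (Icc 0 a)) (hu : IsGoodPartition a u) :
    ∀ p q, p < q → f (u q) - sInf (f '' Icc (u q) (u p)) ≤ ∑ n ∈ Finset.Ico p q, termU f u n := by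
  intro p q hpq
  induction q, hpq using Nat.le_induction with
  | base =>
    rw [Finset.sum_Ico_eq_sum_range]
    simp [termU]
  | succ q hq IH =>
    have hq1 : u (q+1) < u q := good_anti hu (Nat.lt_succ_self q)
    have hqp : u q < u p := good_anti hu hq
    set S1 := sInf (f '' Icc (u (q+1)) (u q)) with hS1
    set S2 := sInf (f '' Icc (u q) (u p)) with hS2
    have hmin : min S1 S2 ≤ sInf (f '' Icc (u (q+1)) (u p)) := by
      refine le_csInf ⟨f (u (q+1)), u (q+1), ⟨le_refl _, by linarith⟩, rfl⟩ ?_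
      rintro - ⟨w, hw, rfl⟩
      rcases le_total w (u q) with h | h
      · exact le_trans (min_le_left _ _) (sInf_le_apply hf (good_mem hu _) (good_mem hu _) ⟨hw.1, h⟩)
      · exact le_trans (min_le_right _ _) (sInf_le_apply hf (good_mem hu _) (good_mem hu _) ⟨h, hw.2⟩)
    have hS1le : S1 ≤ f (u q) :=
      sInf_le_apply hf (good_mem hu _) (good_mem hu _) ⟨hq1.le, le_refl _⟩
    have hsum : ∑ n ∈ Finset.Ico p (q+1), termU f u n
        = ∑ n ∈ Finset.Ico p q, termU f u n + termU f u q :=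
      Finset.sum_Ico_succ_top (Nat.le_of_succ_le hq) _
    have hnn : 0 ≤ ∑ n ∈ Finset.Ico p q, termU f u n :=
      Finset.sum_nonneg fun n _ => termU_nonneg hf hu n
    rcases le_total S1 S2 with h | h
    · have : min S1 S2 = S1 := min_eq_left h
      rw [hsum]
      have : f (u (q+1)) - sInf (f '' Icc (u (q+1)) (u p)) ≤ f (u (q+1)) - S1 := by
        have := hmin; rw [min_eq_left h] at this; linarith
      have ht : f (u (q+1)) - S1 = termU f u q := rfl
      linarith
    · rw [hsum]
      have h1 : f (u (q+1)) - sInf (f '' Icc (u (q+1)) (u p)) ≤ f (u (q+1)) - S2 := by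
        have := hmin; rw [min_eq_right h] at this; linarith
      have h2 : f (u q) - S2 ≤ ∑ n ∈ Finset.Ico p q, termU f u n := IH
      have ht : termU f u q = f (u (q+1)) - S1 := rfl
      linarith

noncomputable def idx (u : ℕ → ℝ) (τ : ℝ) (p : ℝ × ℕ) : ℕ :=
  sInf {m | p.2 < m ∧ u m ≤ p.1 / (1 + τ)}

noncomputable def bm (u : ℕ → ℝ) (τ : ℝ) : ℕ → ℝ × ℕ
  | 0 => (u 0, 0)
  | k + 1 => (max (u (idx u τ (bm u τ k))) ((bm u τ k).1 / 2), idx u τ (bm u τ k))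

noncomputable def B (u : ℕ → ℝ) (τ : ℝ) (k : ℕ) : ℝ := (bm u τ k).1
noncomputable def M (u : ℕ → ℝ) (τ : ℝ) (k : ℕ) : ℕ := (bm u τ k).2

lemma B_zero : B u τ 0 = u 0 := rfl
lemma M_zero : M u τ 0 = 0 := rfl
lemma M_succ (k : ℕ) : M u τ (k + 1) = idx u τ (bm u τ k) := rfl
lemma B_succ (k : ℕ) : B u τ (k + 1) = max (u (M u τ (k + 1))) (B u τ k / 2) := rfl

lemma step (hu : IsGoodPartition a u) (hτ0 : 0 < τ) (hτ2 : τ ≤ 1/2) (k : ℕ)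
    (h1 : u (M u τ k) ≤ B u τ k) (h2 : B u τ k ≤ (1 + τ) * u (M u τ k)) :
    M u τ k < M u τ (k + 1) ∧
    u (M u τ (k + 1)) ≤ B u τ (k + 1) ∧
    B u τ (k + 1) ≤ (1 + τ) * u (M u τ (k + 1)) ∧
    (1 + τ) * B u τ (k + 1) ≤ B u τ k ∧
    B u τ k ≤ 2 * B u τ (k + 1) ∧
    B u τ (k + 1) - u (M u τ (k + 1)) ≤
      3 * τ * (u (M u τ (k + 1) - 1) - u (M u τ (k + 1))) := by
  have hτ1 : (0:ℝ) < 1 + τ := by linarith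
  have hBpos : 0 < B u τ k := lt_of_lt_of_le (hu.2.1 _) h1
  have hposd : 0 < B u τ k / (1 + τ) := div_pos hBpos hτ1
  set s : Set ℕ := {m | M u τ k < m ∧ u m ≤ B u τ k / (1 + τ)} with hs
  have hne : s.Nonempty := by
    have h3 := (hu.2.2.2.1.eventually_lt_const hposd).and
      (Filter.eventually_gt_atTop (M u τ k))
    obtain ⟨m, hm1, hm2⟩ := h3.exists
    exact ⟨m, hm2, hm1.le⟩
  have hMs : M u τ (k + 1) = sInf s := rfl
  set n := M u τ (k + 1) with hn
  have hmem : n ∈ s := hMs ▸ Nat.sInf_mem hne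
  obtain ⟨hn1, hn2⟩ := hmem
  have hn2' : (1 + τ) * u n ≤ B u τ k := by
    rw [le_div_iff₀ hτ1] at hn2; linarith [hn2]
  have hn1' : 1 ≤ n := Nat.one_le_iff_ne_zero.2 (by omega)
  -- pre-gap bound
  have hpre : B u τ k ≤ (1 + τ) * u (n - 1) := by
    rcases Nat.lt_or_ge (M u τ k) (n - 1) with h | h
    · have hlt : n - 1 < sInf s := by omega
      have := Nat.notMem_of_lt_sInf hlt
      simp only [hs, Set.mem_setOf_eq, not_and, not_le] at this
      have := this h
      rw [div_lt_iff₀ hτ1] at this; linarith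
    · have : M u τ k = n - 1 := by omega
      rw [← this]; exact h2
  have hgap2 : u (n - 1) ≤ 2 * u n := by
    have := hu.2.2.2.2 (n - 1)
    have he : n - 1 + 1 = n := by omega
    rwa [he] at this
  have hlow : B u τ k ≤ 2 * (1 + τ) * u n := by nlinarith
  have hBk1 : B u τ (k + 1) = max (u n) (B u τ k / 2) := B_succ k
  have hanti : u n ≤ u (n - 1) := (good_anti hu).antitone (by omega)
  refine ⟨hn1, ?_, ?_, ?_, ?_, ?_⟩
  · rw [hBk1]; exact le_max_left _ _
  · rw [hBk1]
    refine max_le (by nlinarith [hu.2.1 n]) (by linarith)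
  · rw [hBk1]
    have : max (u n) (B u τ k / 2) ≤ B u τ k / (1 + τ) := by
      refine max_le hn2 ?_
      rw [div_le_div_iff₀ (by norm_num) hτ1]; nlinarith
    calc (1 + τ) * max (u n) (B u τ k / 2) ≤ (1 + τ) * (B u τ k / (1 + τ)) :=
          mul_le_mul_of_nonneg_left this (by linarith)
      _ = B u τ k := mul_div_cancel₀ _ (by linarith)
  · rw [hBk1]; linarith [le_max_right (u n) (B u τ k / 2)]
  · rw [hBk1]
    rcases le_total (B u τ k / 2) (u n) with h | h
    · rw [max_eq_left h]; nlinarith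
    · rw [max_eq_right h]; nlinarith


lemma inv (hu : IsGoodPartition a u) (hτ0 : 0 < τ) (hτ2 : τ ≤ 1/2) :
    ∀ k, u (M u τ k) ≤ B u τ k ∧ B u τ k ≤ (1 + τ) * u (M u τ k) := by
  intro k
  induction k with
  | zero =>
    constructor
    · exact le_of_eq (B_zero (τ := τ)).symm
    · rw [B_zero, M_zero]; nlinarith [hu.2.1 0]
  | succ k ih =>
    obtain ⟨-, h1, h2, -⟩ := step hu hτ0 hτ2 k ih.1 ih.2
    exact ⟨h1, h2⟩

lemma stepAll (hu : IsGoodPartition a u) (hτ0 : 0 < τ) (hτ2 : τ ≤ 1/2) (k : ℕ) :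
    M u τ k < M u τ (k + 1) ∧
    u (M u τ (k + 1)) ≤ B u τ (k + 1) ∧
    B u τ (k + 1) ≤ (1 + τ) * u (M u τ (k + 1)) ∧
    (1 + τ) * B u τ (k + 1) ≤ B u τ k ∧
    B u τ k ≤ 2 * B u τ (k + 1) ∧
    B u τ (k + 1) - u (M u τ (k + 1)) ≤
      3 * τ * (u (M u τ (k + 1) - 1) - u (M u τ (k + 1))) :=
  step hu hτ0 hτ2 k (inv hu hτ0 hτ2 k).1 (inv hu hτ0 hτ2 k).2

lemma B_pos (hu : IsGoodPartition a u) (hτ0 : 0 < τ) (hτ2 : τ ≤ 1/2) (k : ℕ) :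
    0 < B u τ k := lt_of_lt_of_le (hu.2.1 _) (inv hu hτ0 hτ2 k).1

lemma B_succ_lt (hu : IsGoodPartition a u) (hτ0 : 0 < τ) (hτ2 : τ ≤ 1/2) (k : ℕ) :
    B u τ (k + 1) < B u τ k := by
  have h := (stepAll hu hτ0 hτ2 k).2.2.2.1
  nlinarith [B_pos hu hτ0 hτ2 (k + 1)]

lemma B_anti (hu : IsGoodPartition a u) (hτ0 : 0 < τ) (hτ2 : τ ≤ 1/2) : StrictAnti (B u τ) :=
  strictAnti_nat_of_succ_lt (B_succ_lt hu hτ0 hτ2)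

lemma B_le_a (hu : IsGoodPartition a u) (hτ0 : 0 < τ) (hτ2 : τ ≤ 1/2) (k : ℕ) :
    B u τ k ≤ a := by
  have := (B_anti hu hτ0 hτ2).antitone (Nat.zero_le k)
  rw [B_zero, hu.1] at this; exact this

lemma B_tendsto (hu : IsGoodPartition a u) (hτ0 : 0 < τ) (hτ2 : τ ≤ 1/2) :
    Filter.Tendsto (B u τ) Filter.atTop (nhds 0) := by
  have hτ1 : (0:ℝ) < 1 + τ := by linarith
  have hgeo : ∀ k, B u τ k ≤ u 0 * (1 / (1 + τ)) ^ k := by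
    intro k
    induction k with
    | zero => simp [B_zero]
    | succ k ih =>
      have h := (stepAll hu hτ0 hτ2 k).2.2.2.1
      have : B u τ (k + 1) ≤ B u τ k / (1 + τ) := by
        rw [le_div_iff₀ hτ1]; linarith
      calc B u τ (k + 1) ≤ B u τ k / (1 + τ) := this
        _ ≤ u 0 * (1 / (1 + τ)) ^ k / (1 + τ) := by gcongr
        _ = u 0 * (1 / (1 + τ)) ^ (k + 1) := by
            rw [pow_succ]; ring
  have hlim : Filter.Tendsto (fun k => u 0 * (1 / (1 + τ)) ^ k) Filter.atTop (nhds 0) := by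
    rw [show (0:ℝ) = u 0 * 0 by ring]
    exact (tendsto_pow_atTop_nhds_zero_of_lt_one (by positivity)
      (by rw [div_lt_one hτ1]; linarith)).const_mul _
  exact squeeze_zero (fun k => (B_pos hu hτ0 hτ2 k).le) hgeo hlim

lemma M_mono (hu : IsGoodPartition a u) (hτ0 : 0 < τ) (hτ2 : τ ≤ 1/2) : StrictMono (M u τ) :=
  strictMono_nat_of_lt_succ (fun k => (stepAll hu hτ0 hτ2 k).1)

/-- The sum of the insertion errors `δ k = B k - u (M k)` is at most `3 τ a`. -/
lemma delta_sum (hu : IsGoodPartition a u) (hτ0 : 0 < τ) (hτ2 : τ ≤ 1/2) (K : ℕ) :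
    ∑ k ∈ Finset.range K, (B u τ k - u (M u τ k)) ≤ 3 * τ * a := by
  have key : ∀ K, ∑ k ∈ Finset.range (K + 1), (B u τ k - u (M u τ k))
      ≤ 3 * τ * (u 0 - u (M u τ K)) := by
    intro K
    induction K with
    | zero => simp [B_zero, M_zero]
    | succ K ih =>
      rw [Finset.sum_range_succ]
      have hδ := (stepAll hu hτ0 hτ2 K).2.2.2.2.2
      have hM : M u τ K ≤ M u τ (K + 1) - 1 := by
        have := (stepAll hu hτ0 hτ2 K).1; omega
      have hle : u (M u τ (K + 1) - 1) ≤ u (M u τ K) :=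
        (good_anti hu).antitone hM
      have h3 : (0:ℝ) ≤ 3 * τ := by linarith
      nlinarith [mul_le_mul_of_nonneg_left hle h3]
  rcases K with - | K
  · have ha : 0 < a := hu.1 ▸ hu.2.1 0
    simp
    nlinarith
  · calc ∑ k ∈ Finset.range (K + 1), (B u τ k - u (M u τ k))
        ≤ 3 * τ * (u 0 - u (M u τ K)) := key K
      _ ≤ 3 * τ * a := by
          have h1 := hu.2.1 (M u τ K)
          have h2 : u 0 = a := hu.1
          nlinarith


lemma B_taugood (hu : IsGoodPartition a u) (hτ0 : 0 < τ) (hτ2 : τ ≤ 1/2) :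
    IsTauGoodPartition τ a (B u τ) := by
  refine ⟨⟨?_, B_pos hu hτ0 hτ2, B_succ_lt hu hτ0 hτ2, B_tendsto hu hτ0 hτ2,
    fun k => (stepAll hu hτ0 hτ2 k).2.2.2.2.1⟩, fun k => (stepAll hu hτ0 hτ2 k).2.2.2.1⟩
  rw [B_zero, hu.1]

lemma B_mem (hu : IsGoodPartition a u) (hτ0 : 0 < τ) (hτ2 : τ ≤ 1/2) (k : ℕ) :
    B u τ k ∈ Icc 0 a := ⟨(B_pos hu hτ0 hτ2 k).le, B_le_a hu hτ0 hτ2 k⟩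

lemma termB_le (hf : LipschitzOnWith 1 f (Icc 0 a)) (hu : IsGoodPartition a u)
    (hτ0 : 0 < τ) (hτ2 : τ ≤ 1/2) (k : ℕ) :
    termU f (B u τ) k ≤
      (f (u (M u τ (k + 1))) - sInf (f '' Icc (u (M u τ (k + 1))) (u (M u τ k))))
      + (B u τ k - u (M u τ k)) + (B u τ (k + 1) - u (M u τ (k + 1))) := by
  set n0 := M u τ k
  set n1 := M u τ (k + 1)
  have hn01 : n0 < n1 := (stepAll hu hτ0 hτ2 k).1
  have hun : u n1 ≤ u n0 := (good_anti hu).antitone hn01.le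
  have hi0 := inv hu hτ0 hτ2 k
  have hi1 := inv hu hτ0 hτ2 (k + 1)
  have hB1 : B u τ (k + 1) ≤ B u τ k := (B_succ_lt hu hτ0 hτ2 k).le
  have hmem0 := good_mem hu n0
  have hmem1 := good_mem hu n1
  have hBmem0 := B_mem hu hτ0 hτ2 k
  have hBmem1 := B_mem hu hτ0 hτ2 (k + 1)
  have hf1 : f (B u τ (k + 1)) - f (u n1) ≤ B u τ (k + 1) - u n1 := by
    have := lip_sub hf hBmem1 hmem1
    rwa [abs_of_nonneg (by linarith [hi1.1])] at this
  have hsInf : sInf (f '' Icc (u n1) (u n0)) - (B u τ k - u n0)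
      ≤ sInf (f '' Icc (B u τ (k + 1)) (B u τ k)) := by
    refine le_csInf ⟨f (B u τ (k + 1)), B u τ (k + 1), ⟨le_refl _, hB1⟩, rfl⟩ ?_
    rintro - ⟨w, hw, rfl⟩
    have hwmem : w ∈ Icc (0:ℝ) a :=
      ⟨le_trans hBmem1.1 hw.1, le_trans hw.2 hBmem0.2⟩
    rcases le_total w (u n0) with h | h
    · have h1 : sInf (f '' Icc (u n1) (u n0)) ≤ f w :=
        sInf_le_apply hf hmem1 hmem0 ⟨le_trans hi1.1 hw.1, h⟩
      have h2 : u n0 ≤ B u τ k := hi0.1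
      linarith
    · have h1 : f (u n0) - f w ≤ |u n0 - w| := lip_sub hf hmem0 hwmem
      have h2 : |u n0 - w| ≤ B u τ k - u n0 := by
        rw [abs_sub_comm, abs_of_nonneg (by linarith)]
        linarith [hw.2]
      have h3 : sInf (f '' Icc (u n1) (u n0)) ≤ f (u n0) :=
        sInf_le_apply hf hmem1 hmem0 ⟨hun, le_refl _⟩
      linarith
  have : termU f (B u τ) k
      = f (B u τ (k + 1)) - sInf (f '' Icc (B u τ (k + 1)) (B u τ k)) := rfl
  rw [this]
  linarith

lemma block_sum (hf : LipschitzOnWith 1 f (Icc 0 a)) (hu : IsGoodPartition a u)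
    (hτ0 : 0 < τ) (hτ2 : τ ≤ 1/2) (K : ℕ) :
    ∑ k ∈ Finset.range K,
      (f (u (M u τ (k + 1))) - sInf (f '' Icc (u (M u τ (k + 1))) (u (M u τ k))))
      ≤ ∑ n ∈ Finset.range (M u τ K), termU f u n := by
  induction K with
  | zero => simp [M_zero]
  | succ K ih =>
    rw [Finset.sum_range_succ]
    have hc := chain hf hu (M u τ K) (M u τ (K + 1)) ((stepAll hu hτ0 hτ2 K).1)
    have hsplit : ∑ n ∈ Finset.range (M u τ K), termU f u n
        + ∑ n ∈ Finset.Ico (M u τ K) (M u τ (K + 1)), termU f u n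
        = ∑ n ∈ Finset.range (M u τ (K + 1)), termU f u n := by
      rw [Finset.range_eq_Ico, Finset.range_eq_Ico]
      exact Finset.sum_Ico_consecutive (termU f u) (Nat.zero_le _) ((stepAll hu hτ0 hτ2 K).1).le
    linarith

lemma key (hf : LipschitzOnWith 1 f (Icc 0 a)) (hu : IsGoodPartition a u)
    (hτ0 : 0 < τ) (hτ2 : τ ≤ 1/2) :
    totalDrop f (B u τ) ≤ totalDrop f u + 6 * τ * a := by
  have hBgood : IsGoodPartition a (B u τ) := (B_taugood hu hτ0 hτ2).1
  have hsum : Summable (termU f (B u τ)) := termU_summable hf hBgood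
  have hmain : ∀ K, ∑ k ∈ Finset.range K, termU f (B u τ) k
      ≤ totalDrop f u + 6 * τ * a := by
    intro K
    have h1 : ∑ k ∈ Finset.range K, termU f (B u τ) k
        ≤ ∑ k ∈ Finset.range K,
            ((f (u (M u τ (k + 1))) - sInf (f '' Icc (u (M u τ (k + 1))) (u (M u τ k))))
            + (B u τ k - u (M u τ k)) + (B u τ (k + 1) - u (M u τ (k + 1)))) :=
      Finset.sum_le_sum fun k _ => termB_le hf hu hτ0 hτ2 k
    rw [Finset.sum_add_distrib, Finset.sum_add_distrib] at h1
    have h2 := block_sum hf hu hτ0 hτ2 K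
    have h3 : ∑ n ∈ Finset.range (M u τ K), termU f u n ≤ totalDrop f u :=
      Summable.sum_le_tsum _ (fun n _ => termU_nonneg hf hu n) (termU_summable hf hu)
    have h4 := delta_sum hu hτ0 hτ2 K
    have h5 : ∑ k ∈ Finset.range K, (B u τ (k + 1) - u (M u τ (k + 1))) ≤ 3 * τ * a := by
      have hδ0 : B u τ 0 - u (M u τ 0) = 0 := by rw [B_zero, M_zero]; ring
      have := delta_sum hu hτ0 hτ2 (K + 1)
      rw [Finset.sum_range_succ' (fun k => B u τ k - u (M u τ k)) K, hδ0] at this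
      linarith
    linarith
  exact Summable.tsum_le_of_sum_range_le hsum hmain


lemma geom_good (ha : 0 < a) : IsGoodPartition a (fun n => a * (1/2) ^ n) := by
  refine ⟨by simp, fun n => by positivity, fun n => ?_, ?_, fun n => ?_⟩
  · have h : (0:ℝ) < (1/2:ℝ) ^ n := by positivity
    simp only [pow_succ]; nlinarith
  · rw [show (0:ℝ) = a * 0 by ring]
    exact (tendsto_pow_atTop_nhds_zero_of_lt_one (by norm_num) (by norm_num)).const_mul _
  · simp only [pow_succ]; ring_nf; nlinarith [pow_pos (by norm_num : (0:ℝ) < 1/2) n]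

lemma geom_taugood (ha : 0 < a) (hτ0 : 0 < τ) (hτ1 : τ < 1) :
    IsTauGoodPartition τ a (fun n => a * (1/2) ^ n) := by
  refine ⟨geom_good ha, fun n => ?_⟩
  have hah : (0:ℝ) < a * (1/2:ℝ) ^ n := by positivity
  simp only [pow_succ]
  nlinarith [mul_nonneg hah.le (by linarith : (0:ℝ) ≤ 1 - τ)]


end St16

open St16 in
/-- **Corollary.** For every `1`-Lipschitz `f : [0,a] → ℝ` and `τ ∈ (0,1)`,
`T_τ(f) ≤ T(f) + 36τa`. -/
theorem statement16 (a τ : ℝ) (ha : 0 < a) (hτ : τ ∈ Set.Ioo (0 : ℝ) 1) (f : ℝ → ℝ)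
    (hf : LipschitzOnWith 1 f (Set.Icc 0 a)) :
    dropTau τ a f ≤ drop a f + 36 * τ * a := by
  obtain ⟨hτ0, hτ1⟩ := hτ
  have hg : IsGoodPartition a (fun n => a * (1/2) ^ n) := geom_good ha
  have hgτ : IsTauGoodPartition τ a (fun n => a * (1/2) ^ n) := geom_taugood ha hτ0 hτ1
  have hbdd : BddBelow {t | ∃ u, IsTauGoodPartition τ a u ∧ t = totalDrop f u} := by
    refine ⟨0, ?_⟩; rintro t ⟨u, hu, rfl⟩; exact totalDrop_nonneg hf hu.1
  have hdropnn : 0 ≤ drop a f := by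
    refine Real.sInf_nonneg ?_
    rintro t ⟨u, hu, rfl⟩; exact totalDrop_nonneg hf hu
  rcases le_or_gt τ (1/2) with hc | hc
  · have hmain : ∀ ε > (0:ℝ), dropTau τ a f ≤ (drop a f + 6 * τ * a) + ε := by
      intro ε hε
      obtain ⟨t, ht, hlt⟩ :=
        Real.lt_sInf_add_pos (s := {t | ∃ u, IsGoodPartition a u ∧ t = totalDrop f u})
          ⟨totalDrop f (fun n => a * (1/2) ^ n), ⟨_, hg, rfl⟩⟩ hε
      obtain ⟨u, hu, rfl⟩ := ht
      have hτg : IsTauGoodPartition τ a (B u τ) := B_taugood hu hτ0 hc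
      have h1 : dropTau τ a f ≤ totalDrop f (B u τ) := csInf_le hbdd ⟨B u τ, hτg, rfl⟩
      have h2 := key hf hu hτ0 hc
      have h3 : totalDrop f u < drop a f + ε := hlt
      linarith
    have h := le_of_forall_pos_le_add hmain
    nlinarith [mul_pos hτ0 ha]
  · have h1 : dropTau τ a f ≤ totalDrop f (fun n => a * (1/2) ^ n) :=
      csInf_le hbdd ⟨_, hgτ, rfl⟩
    have h2 : totalDrop f (fun n => a * (1/2) ^ n) ≤ a := totalDrop_le_a hf hg
    nlinarith
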